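/- Let Λ = (λ_k)_{k≥0} be a strictly increasing sequence of positive real numbers satisfying the Müntz condition Σ_k 1/λ_k < ∞, and let V_Λ : M_Λ^1 → C([0,1]) be the restriction of the Volterra operator, (V_Λ f)(x) = ∫_0^x f(t) dt. Then the essential norm of V_Λ equals 1/2: inf{‖V_Λ − S‖ : S : M_Λ^1 → C([0,1]) compact bounded linear operator} = 1/2. -/

import Mathlib

open MeasureTheory Set

/-- Lebesgue measure restricted to `[0,1]`. -/
noncomputable def mu01 : Measure ℝ := volume.restrict (Icc (0:ℝ) 1)

/-- The Müntz space `M_Λ^1`: the closure in `L¹([0,1])` of the linear span of the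
monomials `t ↦ t ^ Λ k`. -/
noncomputable def muntzSpace (Λ : ℕ → ℝ) : Submodule ℝ (Lp ℝ 1 mu01) :=
  (Submodule.span ℝ {f : Lp ℝ 1 mu01 |
    ∃ k : ℕ, (f : ℝ → ℝ) =ᵐ[mu01] fun t => t ^ Λ k}).topologicalClosure

open Filter Topology Real

set_option maxHeartbeats 1000000

instance : IsFiniteMeasure mu01 := by
  constructor
  rw [mu01, Measure.restrict_apply_univ, Real.volume_Icc]
  exact ENNReal.ofReal_lt_top

lemma mu01_restrict {s : Set ℝ} (hs : MeasurableSet s) (h : s ⊆ Icc 0 1) :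
    mu01.restrict s = volume.restrict s := by
  rw [mu01, Measure.restrict_restrict hs, inter_eq_self_of_subset_left h]

lemma mu01_eq_Ioc : mu01 = volume.restrict (Ioc (0:ℝ) 1) :=
  (Measure.restrict_congr_set Ioc_ae_eq_Icc).symm

lemma mu01_restrict_Ioc01 : mu01.restrict (Ioc (0:ℝ) 1) = mu01 := by
  rw [mu01_restrict measurableSet_Ioc Ioc_subset_Icc_self, ← mu01_eq_Ioc]

lemma setIntegral_rpow_mu01 {p x : ℝ} (hp : 0 < p) (hx0 : 0 ≤ x) (hx1 : x ≤ 1) :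
    ∫ t in Ioc (0:ℝ) x, t ^ p ∂mu01 = x ^ (p + 1) / (p + 1) := by
  rw [mu01_restrict measurableSet_Ioc (Ioc_subset_Icc_self.trans (Icc_subset_Icc_right hx1)),
    ← intervalIntegral.integral_of_le hx0, integral_rpow (Or.inl (by linarith)),
    Real.zero_rpow (by positivity)]
  ring

lemma integral_rpow_mu01 {p : ℝ} (hp : 0 < p) : ∫ t, t ^ p ∂mu01 = 1 / (p + 1) := by
  rw [← mu01_restrict_Ioc01, setIntegral_rpow_mu01 hp zero_le_one le_rfl, Real.one_rpow]

lemma ae_mem_Icc_mu01 : ∀ᵐ t ∂mu01, t ∈ Icc (0:ℝ) 1 := by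
  rw [mu01]; exact ae_restrict_mem measurableSet_Icc

lemma memLp_mono {p : ℝ} (hp : 0 < p) : MemLp (fun t : ℝ => t ^ p) 1 mu01 := by
  refine MemLp.of_bound ((measurable_id.pow_const p).aestronglyMeasurable) 1 ?_
  filter_upwards [ae_mem_Icc_mu01] with t ht
  rw [Real.norm_eq_abs, abs_of_nonneg (Real.rpow_nonneg ht.1 p)]
  exact Real.rpow_le_one ht.1 ht.2 hp.le

/-- Upper bound: the rank-one operator `f ↦ ½ (∫ f) • 1` is compact and approximates `V`
within `1/2`. -/
lemma volterra_upper_bound (Λ : ℕ → ℝ) (V : ↥(muntzSpace Λ) →L[ℝ] C(Icc (0:ℝ) 1, ℝ))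
    (hV : ∀ (f : ↥(muntzSpace Λ)) (x : Icc (0:ℝ) 1),
      V f x = ∫ t in Ioc (0:ℝ) (x:ℝ), ((f : Lp ℝ 1 mu01) : ℝ → ℝ) t ∂mu01) :
    ∃ S : ↥(muntzSpace Λ) →L[ℝ] C(Icc (0:ℝ) 1, ℝ), IsCompactOperator ⇑S ∧ ‖V - S‖ ≤ 1/2 := by
  set T : ↥(muntzSpace Λ) →L[ℝ] C(Icc (0:ℝ) 1, ℝ) :=
    ((L1.integralCLM).comp (muntzSpace Λ).subtypeL).smulRight (1 : C(Icc (0:ℝ) 1, ℝ)) with hT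
  have hSapp : ∀ (f : ↥(muntzSpace Λ)) (x : Icc (0:ℝ) 1),
      ((2⁻¹ : ℝ) • T) f x = 2⁻¹ * ∫ a, ((f : Lp ℝ 1 mu01) : ℝ → ℝ) a ∂mu01 := by
    intro f x
    simp only [hT, ContinuousLinearMap.smul_apply, ContinuousLinearMap.smulRight_apply,
      ContinuousLinearMap.comp_apply, Submodule.coe_subtypeL, Submodule.subtype_apply,
      ContinuousMap.smul_apply, ContinuousMap.smul_apply, ContinuousMap.one_apply, smul_eq_mul,
      mul_one]
    rw [← L1.integral_eq, L1.integral_eq_integral]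
  refine ⟨(2⁻¹ : ℝ) • T, ?_, ?_⟩
  · refine ⟨(fun r : ℝ => r • (1 : C(Icc (0:ℝ) 1, ℝ))) '' Icc (-1) 1,
      isCompact_Icc.image (continuous_id.smul continuous_const), ?_⟩
    refine Filter.mem_of_superset (Metric.ball_mem_nhds 0 one_pos) ?_
    intro f hf
    have hfn : ‖f‖ < 1 := by simpa [Metric.mem_ball, dist_eq_norm] using hf
    have habs : |∫ a, ((f : Lp ℝ 1 mu01) : ℝ → ℝ) a ∂mu01| ≤ ‖f‖ := by
      rw [← Real.norm_eq_abs]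
      calc ‖∫ a, ((f : Lp ℝ 1 mu01) : ℝ → ℝ) a ∂mu01‖
          ≤ ∫ a, ‖((f : Lp ℝ 1 mu01) : ℝ → ℝ) a‖ ∂mu01 := norm_integral_le_integral_norm _
        _ = ‖f‖ := (L1.norm_eq_integral_norm _).symm
    refine ⟨2⁻¹ * ∫ a, ((f : Lp ℝ 1 mu01) : ℝ → ℝ) a ∂mu01, ?_, ?_⟩
    · rw [mem_Icc, ← abs_le]
      rw [abs_mul]
      calc |(2:ℝ)⁻¹| * |∫ a, ((f : Lp ℝ 1 mu01) : ℝ → ℝ) a ∂mu01| ≤ 2⁻¹ * 1 := by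
            rw [abs_of_nonneg (by norm_num : (0:ℝ) ≤ 2⁻¹)]
            exact mul_le_mul_of_nonneg_left (habs.trans hfn.le) (by norm_num)
        _ ≤ 1 := by norm_num
    · ext x
      rw [hSapp f x]
      simp [ContinuousMap.smul_apply]
  · refine ContinuousLinearMap.opNorm_le_bound _ (by norm_num) fun f => ?_
    refine (ContinuousMap.norm_le _ (by positivity)).mpr fun x => ?_
    have hx0 : (0:ℝ) ≤ (x:ℝ) := x.2.1
    have hx1 : (x:ℝ) ≤ 1 := x.2.2
    set F := ((f : Lp ℝ 1 mu01) : ℝ → ℝ) with hF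
    have hFi : Integrable F mu01 := L1.integrable_coeFn _
    have hsplitF : ∫ a, F a ∂mu01
        = (∫ t in Ioc (0:ℝ) (x:ℝ), F t ∂mu01) + ∫ t in Ioc (x:ℝ) 1, F t ∂mu01 := by
      rw [← setIntegral_union (Ioc_disjoint_Ioc_of_le le_rfl) measurableSet_Ioc
        hFi.integrableOn hFi.integrableOn, Ioc_union_Ioc_eq_Ioc hx0 hx1, mu01_restrict_Ioc01]
    have hsplitN : (∫ t in Ioc (0:ℝ) (x:ℝ), ‖F t‖ ∂mu01) + ∫ t in Ioc (x:ℝ) 1, ‖F t‖ ∂mu01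
        = ‖f‖ := by
      rw [← setIntegral_union (Ioc_disjoint_Ioc_of_le le_rfl) measurableSet_Ioc
        hFi.norm.integrableOn hFi.norm.integrableOn, Ioc_union_Ioc_eq_Ioc hx0 hx1,
        mu01_restrict_Ioc01]
      exact (L1.norm_eq_integral_norm _).symm
    rw [ContinuousLinearMap.sub_apply, ContinuousMap.sub_apply, hV f x, hSapp f x, hsplitF]
    set I := ∫ t in Ioc (0:ℝ) (x:ℝ), F t ∂mu01
    set J := ∫ t in Ioc (x:ℝ) 1, F t ∂mu01
    have hIn : |I| ≤ ∫ t in Ioc (0:ℝ) (x:ℝ), ‖F t‖ ∂mu01 := by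
      rw [← Real.norm_eq_abs]; exact norm_integral_le_integral_norm _
    have hJn : |J| ≤ ∫ t in Ioc (x:ℝ) 1, ‖F t‖ ∂mu01 := by
      rw [← Real.norm_eq_abs]; exact norm_integral_le_integral_norm _
    have heq : I - 2⁻¹ * (I + J) = (I - J) / 2 := by ring
    rw [heq, Real.norm_eq_abs, abs_div, abs_two]
    have habs : |I - J| ≤ |I| + |J| := abs_sub _ _
    have : |I| + |J| ≤ ‖f‖ := by rw [← hsplitN]; exact add_le_add hIn hJn
    linarith

/-- Lower bound: no compact operator can approximate `V` within less than `1/2`. -/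
lemma volterra_lower_bound (Λ : ℕ → ℝ) (hpos : ∀ k, 0 < Λ k)
    (hmuntz : Summable fun k => 1 / Λ k)
    (V : ↥(muntzSpace Λ) →L[ℝ] C(Icc (0:ℝ) 1, ℝ))
    (hV : ∀ (f : ↥(muntzSpace Λ)) (x : Icc (0:ℝ) 1),
      V f x = ∫ t in Ioc (0:ℝ) (x:ℝ), ((f : Lp ℝ 1 mu01) : ℝ → ℝ) t ∂mu01)
    (S : ↥(muntzSpace Λ) →L[ℝ] C(Icc (0:ℝ) 1, ℝ)) (hS : IsCompactOperator ⇑S) :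
    1/2 ≤ ‖V - S‖ := by
  classical
  have hm : ∀ k, MemLp (fun t : ℝ => t ^ Λ k) 1 mu01 := fun k => memLp_mono (hpos k)
  set u : ℕ → Lp ℝ 1 mu01 := fun k => (hm k).toLp _ with hu
  have humem : ∀ k, u k ∈ muntzSpace Λ := fun k =>
    Submodule.le_topologicalClosure _ (Submodule.subset_span ⟨k, (hm k).coeFn_toLp⟩)
  set g : ℕ → ↥(muntzSpace Λ) := fun k => (Λ k + 1) • (⟨u k, humem k⟩ : ↥(muntzSpace Λ)) with hg
  have hgcoe : ∀ k, ((g k : Lp ℝ 1 mu01) : ℝ → ℝ) =ᵐ[mu01] fun t => (Λ k + 1) * t ^ Λ k := by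
    intro k
    have h1 : ((g k : Lp ℝ 1 mu01)) = (Λ k + 1) • u k := rfl
    rw [h1]
    exact (Lp.coeFn_smul _ _).trans ((hm k).coeFn_toLp.mono fun t ht => by
      simp only [Pi.smul_apply, smul_eq_mul, hu, ht])
  have hunorm : ∀ k, ‖u k‖ = 1 / (Λ k + 1) := by
    intro k
    rw [L1.norm_eq_integral_norm]
    have h1 : (fun a => ‖(u k : ℝ → ℝ) a‖) =ᵐ[mu01] fun a => a ^ Λ k := by
      filter_upwards [(hm k).coeFn_toLp, ae_mem_Icc_mu01] with t ht htI
      rw [ht, Real.norm_eq_abs, abs_of_nonneg (Real.rpow_nonneg htI.1 _)]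
    rw [integral_congr_ae h1, integral_rpow_mu01 (hpos k)]
  have hgnorm : ∀ k, ‖g k‖ = 1 := by
    intro k
    have hk1 : 0 < Λ k + 1 := by have := hpos k; linarith
    have h2 : ‖g k‖ = |Λ k + 1| * ‖(⟨u k, humem k⟩ : ↥(muntzSpace Λ))‖ := by
      rw [hg]; simp [norm_smul]
    have h3 : ‖(⟨u k, humem k⟩ : ↥(muntzSpace Λ))‖ = ‖u k‖ := rfl
    rw [h2, h3, hunorm, abs_of_pos hk1]
    field_simp
  have hVg : ∀ (k) (x : Icc (0:ℝ) 1), V (g k) x = (x:ℝ) ^ (Λ k + 1) := by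
    intro k x
    have hk1 : Λ k + 1 ≠ 0 := by have := hpos k; positivity
    rw [hV]
    rw [integral_congr_ae (ae_restrict_of_ae (hgcoe k)), integral_const_mul,
      setIntegral_rpow_mu01 (hpos k) x.2.1 x.2.2]
    field_simp
  have hKc : IsCompact (closure (⇑S '' Metric.closedBall 0 1)) :=
    hS.isCompact_closure_image_of_isVonNBounded (NormedSpace.isVonNBounded_closedBall ℝ _ 1)
  have hmem : ∀ n, (fun n => S (g n)) n ∈ closure (⇑S '' Metric.closedBall 0 1) := fun n =>
    subset_closure ⟨g n, by rw [Metric.mem_closedBall, dist_zero_right, hgnorm n], rfl⟩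
  obtain ⟨h, -, φ, hφ, htend⟩ := hKc.tendsto_subseq hmem
  have hΛtop : Tendsto Λ atTop atTop := by
    rw [tendsto_atTop]
    intro M
    have h0 : Tendsto (fun k => 1 / Λ k) atTop (𝓝 0) := hmuntz.tendsto_atTop_zero
    have hev : ∀ᶠ k in atTop, 1 / Λ k < 1 / max M 1 := h0.eventually_lt_const (by positivity)
    refine hev.mono fun k hk => ?_
    have h1 : max M 1 < Λ k := lt_of_one_div_lt_one_div (hpos k) hk
    exact (le_max_left M 1).trans h1.le
  have key : ∀ ε : ℝ, 0 < ε → ε < 1 → 1/2 - ε ≤ ‖V - S‖ := by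
    intro ε hε hε1
    obtain ⟨N, hN⟩ := Metric.tendsto_atTop.mp htend (ε/2) (by positivity)
    set a := φ N with ha
    set y : ℝ := 1 - ε/2 with hy
    have hy0 : 0 < y := by rw [hy]; linarith
    have hy1 : y < 1 := by rw [hy]; linarith
    have hpa : 0 < Λ a + 1 := by have := hpos a; linarith
    set x : ℝ := y ^ (Λ a + 1)⁻¹ with hxdef
    have hx0 : 0 < x := Real.rpow_pos_of_pos hy0 _
    have hx1 : x < 1 := Real.rpow_lt_one hy0.le hy1 (by positivity)
    have hxpa : x ^ (Λ a + 1) = y := Real.rpow_inv_rpow hy0.le hpa.ne'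
    have htop2 : Tendsto (fun m => Λ (φ m) + 1) atTop atTop :=
      tendsto_atTop_add_const_right atTop 1 (hΛtop.comp hφ.tendsto_atTop)
    have hxq : Tendsto (fun q : ℝ => x ^ q) atTop (𝓝 0) :=
      tendsto_rpow_atTop_of_base_lt_one x (by linarith) hx1
    have hev : ∀ᶠ m in atTop, x ^ (Λ (φ m) + 1) < ε/2 :=
      (hxq.comp htop2).eventually_lt_const (by positivity)
    obtain ⟨m, hm2, hm1⟩ := (hev.and (eventually_ge_atTop N)).exists
    set b := φ m with hb
    have hSab : ‖S (g a) - S (g b)‖ ≤ ε := by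
      have h1 := hN N le_rfl
      have h2 := hN m hm1
      simp only [Function.comp_apply] at h1 h2
      calc ‖S (g a) - S (g b)‖ = dist (S (g a)) (S (g b)) := (dist_eq_norm _ _).symm
        _ ≤ dist (S (g a)) h + dist (S (g b)) h := dist_triangle_right _ _ _
        _ ≤ ε/2 + ε/2 := add_le_add h1.le h2.le
        _ = ε := by ring
    have hxIcc : x ∈ Icc (0:ℝ) 1 := ⟨hx0.le, hx1.le⟩
    have hlow : 1 - ε ≤ x ^ (Λ a + 1) - x ^ (Λ b + 1) := by
      rw [hxpa, hy]
      have := hm2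
      linarith
    have e1 : (V (g a - g b)) ⟨x, hxIcc⟩ = x ^ (Λ a + 1) - x ^ (Λ b + 1) := by
      rw [map_sub, ContinuousMap.sub_apply, hVg, hVg]
    have e2 : ‖(V (g a - g b)) ⟨x, hxIcc⟩‖ ≤ ‖V (g a - g b)‖ :=
      ContinuousMap.norm_coe_le_norm _ _
    have e3 : ‖V (g a - g b)‖ ≤ ‖(V - S) (g a - g b)‖ + ‖S (g a - g b)‖ := by
      have hdec : V (g a - g b) = (V - S) (g a - g b) + S (g a - g b) := by
        simp [ContinuousLinearMap.sub_apply]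
      rw [hdec]; exact norm_add_le _ _
    have hd2 : ‖g a - g b‖ ≤ 2 := by
      calc ‖g a - g b‖ ≤ ‖g a‖ + ‖g b‖ := norm_sub_le _ _
        _ = 2 := by rw [hgnorm, hgnorm]; norm_num
    have e4 : ‖(V - S) (g a - g b)‖ ≤ ‖V - S‖ * 2 := by
      have h5 := ContinuousLinearMap.le_opNorm (V - S) (g a - g b)
      have h6 := norm_nonneg (V - S)
      nlinarith
    have e5 : ‖S (g a - g b)‖ ≤ ε := by rw [map_sub]; exact hSab
    have e6 : 1 - ε ≤ ‖(V (g a - g b)) ⟨x, hxIcc⟩‖ := by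
      rw [e1, Real.norm_eq_abs]
      exact hlow.trans (le_abs_self _)
    linarith
  by_contra hcon
  push_neg at hcon
  set ε := min (1/4) ((1/2 - ‖V - S‖)/2) with hε
  have hε0 : 0 < ε := lt_min (by norm_num) (by linarith)
  have hε1 : ε < 1 := (min_le_left _ _).trans_lt (by norm_num)
  have := key ε hε0 hε1
  have h2 : ε ≤ (1/2 - ‖V - S‖)/2 := min_le_right _ _
  linarith

/-- Under the Müntz condition, the essential norm of the restricted
Volterra operator `V_Λ : M_Λ^1 → C([0,1])` equals `1/2`. -/
theorem volterra_restriction_essentialNorm_eq_half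
    (Λ : ℕ → ℝ) (hmono : StrictMono Λ) (hpos : ∀ k, 0 < Λ k)
    (hmuntz : Summable fun k => 1 / Λ k)
    (V : ↥(muntzSpace Λ) →L[ℝ] C(Icc (0:ℝ) 1, ℝ))
    (hV : ∀ (f : ↥(muntzSpace Λ)) (x : Icc (0:ℝ) 1),
      V f x = ∫ t in Ioc (0:ℝ) (x:ℝ), ((f : Lp ℝ 1 mu01) : ℝ → ℝ) t ∂mu01) :
    sInf {c : ℝ | ∃ S : ↥(muntzSpace Λ) →L[ℝ] C(Icc (0:ℝ) 1, ℝ),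
      IsCompactOperator ⇑S ∧ c = ‖V - S‖} = 1/2 := by
  obtain ⟨S₀, hS₀c, hS₀n⟩ := volterra_upper_bound Λ V hV
  have hbdd : BddBelow {c : ℝ | ∃ S : ↥(muntzSpace Λ) →L[ℝ] C(Icc (0:ℝ) 1, ℝ),
      IsCompactOperator ⇑S ∧ c = ‖V - S‖} := by
    refine ⟨1/2, ?_⟩
    rintro c ⟨S, hSc, rfl⟩
    exact volterra_lower_bound Λ hpos hmuntz V hV S hSc
  apply le_antisymm
  · exact (csInf_le hbdd ⟨S₀, hS₀c, rfl⟩).trans hS₀n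
  · refine le_csInf ⟨‖V - S₀‖, S₀, hS₀c, rfl⟩ ?_
    rintro c ⟨S, hSc, rfl⟩
    exact volterra_lower_bound Λ hpos hmuntz V hV S hSc
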